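/- arXiv:1703.05026 — 13 statements merged into one kernel-verified Lean document; each statement's English description precedes it below -/
import Mathlib

section
/- Let K be a field of characteristic 2 and θ a Tits endomorphism of K. An element z ∈ K is called a Tits trace if z = x^θ + x for some x ∈ K. If z^θ is a Tits trace, then z is a Tits trace. -/
/-- If `θ` is a Tits endomorphism of a field `K` of characteristic 2 and `z^θ` is a
Tits trace (an element of the form `x^θ + x`), then so is `z`. -/
theorem tits_trace_of_theta_trace {K : Type*} [Field K] [CharP K 2] (θ : K →+* K)
    (hθ : ∀ x : K, θ (θ x) = x ^ 2) (z : K) (h : ∃ x : K, θ z = θ x + x) :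
    ∃ x : K, z = θ x + x := by
  obtain ⟨x, hx⟩ := h
  refine ⟨z + x, ?_⟩
  have h2 : (2 : K) = 0 := CharP.cast_eq_zero K 2
  rw [map_add, hx]
  ring_nf
  rw [show θ x * 2 = 0 by rw [h2]; ring, show x * 2 = 0 by rw [h2]; ring]
  ring
end

section
/- Let K be a field of characteristic 2, θ a Tits endomorphism of K, δ ∈ K, and L the splitting field over K of x² + x + δ, with γ ∈ L a root. If δ = λ^θ + λ for some λ ∈ K, then the map extending θ by sending γ to γ + λ (i.e., a + bγ ↦ a^θ + b^θ(γ + λ)) is a Tits endomorphism of L. -/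
/-- Let `K` be a field of characteristic 2, `θ` a Tits endomorphism of `K`, `δ ∈ K`,
and `L = K(γ)` the splitting field over `K` of `x² + x + δ`, with `γ` a root
(`γ ∉ K`, and every element of `L` has the form `a + bγ` with `a, b ∈ K`).
If `δ = λ^θ + λ` for some `λ ∈ K`, then the map extending `θ` which sends `γ` to
`γ + λ`, i.e. `a + bγ ↦ a^θ + b^θ(γ + λ)`, is a Tits endomorphism of `L`. -/
theorem tits_extension_of_trace {K L : Type*} [Field K] [CharP K 2] [Field L]
    [Algebra K L] (θ : K →+* K) (hθ : ∀ x : K, θ (θ x) = x ^ 2)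
    (δ lam : K) (hδ : δ = θ lam + lam) (γ : L)
    (hγ : γ ^ 2 + γ + algebraMap K L δ = 0)
    (hirr : γ ∉ Set.range (algebraMap K L))
    (hspan : ∀ z : L, ∃ a b : K, z = algebraMap K L a + algebraMap K L b * γ) :
    ∃ ψ : L →+* L,
      (∀ a b : K, ψ (algebraMap K L a + algebraMap K L b * γ)
          = algebraMap K L (θ a) + algebraMap K L (θ b) * (γ + algebraMap K L lam)) ∧
      (∀ z : L, ψ (ψ z) = z ^ 2) := by
  have hinj : Function.Injective (algebraMap K L) := (algebraMap K L).injective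
  haveI : CharP L 2 := charP_of_injective_algebraMap hinj 2
  have h2 : (2 : L) = 0 := by exact_mod_cast CharP.cast_eq_zero L 2
  have hsq : γ ^ 2 = γ + algebraMap K L δ := by
    linear_combination hγ - (γ + algebraMap K L δ) * h2
  have huniq : ∀ a b a' b' : K,
      algebraMap K L a + algebraMap K L b * γ
        = algebraMap K L a' + algebraMap K L b' * γ → a = a' ∧ b = b' := by
    intro a b a' b' h
    by_cases hb : b = b'
    · subst hb
      refine ⟨hinj ?_, rfl⟩
      linear_combination h
    · exfalso
      apply hirr
      refine ⟨(a - a') / (b' - b), ?_⟩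
      have hbb : algebraMap K L b' - algebraMap K L b ≠ 0 := by
        rw [← map_sub]
        intro hc
        exact hb (sub_eq_zero.mp (hinj (hc.trans (map_zero _).symm))).symm
      rw [map_div₀, map_sub, map_sub, div_eq_iff hbb]
      linear_combination h
  choose A B hAB using hspan
  set g : L → L := fun z =>
    algebraMap K L (θ (A z)) + algebraMap K L (θ (B z)) * (γ + algebraMap K L lam) with hg
  have gval : ∀ a b : K, g (algebraMap K L a + algebraMap K L b * γ)
      = algebraMap K L (θ a) + algebraMap K L (θ b) * (γ + algebraMap K L lam) := by
    intro a b
    obtain ⟨hA, hB⟩ := huniq a b _ _ (hAB (algebraMap K L a + algebraMap K L b * γ))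
    simp only [hg, ← hA, ← hB]
  have hmul' : ∀ a b c d : K,
      (algebraMap K L a + algebraMap K L b * γ) * (algebraMap K L c + algebraMap K L d * γ)
        = algebraMap K L (a * c + b * d * δ) + algebraMap K L (a * d + b * c + b * d) * γ := by
    intro a b c d
    simp only [map_add, map_mul]
    linear_combination (algebraMap K L b * algebraMap K L d) * hsq
  have gone : g 1 = 1 := by
    have h1 : (1 : L) = algebraMap K L 1 + algebraMap K L 0 * γ := by simp
    rw [h1, gval]; simp
  have gadd : ∀ x y : L, g (x + y) = g x + g y := by
    intro x y
    have hx := hAB x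
    have hy := hAB y
    have : x + y = algebraMap K L (A x + A y) + algebraMap K L (B x + B y) * γ := by
      rw [map_add, map_add]; linear_combination hx + hy
    rw [this, gval]
    simp only [hg, map_add]
    ring
  have hδ' : algebraMap K L δ = algebraMap K L (θ lam) + algebraMap K L lam := by
    rw [hδ, map_add]
  have hD : algebraMap K L (θ δ) = algebraMap K L lam ^ 2 + algebraMap K L (θ lam) := by
    rw [hδ, map_add, hθ, map_add, map_pow]
  have gmul : ∀ x y : L, g (x * y) = g x * g y := by
    intro x y
    have hx := hAB x
    have hy := hAB y
    have hxy := hmul' (A x) (B x) (A y) (B y)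
    rw [← hx, ← hy] at hxy
    rw [hxy, gval]
    simp only [hg, map_add, map_mul]
    set t := algebraMap K L (θ (B x)) * algebraMap K L (θ (B y))
    linear_combination t * hD - t * hsq - t * hδ' - (t * γ * algebraMap K L lam) * h2
  refine ⟨RingHom.mk' ⟨⟨g, gone⟩, gmul⟩ gadd, gval, ?_⟩
  intro z
  have hz := hAB z
  show g (g z) = z ^ 2
  rw [hz, gval]
  have hform : algebraMap K L (θ (A z)) + algebraMap K L (θ (B z)) * (γ + algebraMap K L lam)
      = algebraMap K L (θ (A z) + θ (B z) * lam) + algebraMap K L (θ (B z)) * γ := by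
    rw [map_add, map_mul]; ring
  rw [hform, gval]
  simp only [map_add, map_mul, hθ, map_pow]
  linear_combination (algebraMap K L (B z))^2 * hδ' - (algebraMap K L (B z))^2 * hsq -
    (algebraMap K L (A z) * algebraMap K L (B z) * γ) * h2 +
    (algebraMap K L (B z)^2 * (algebraMap K L (θ lam) + algebraMap K L lam - algebraMap K L δ)) * h2
end

section
/- Let K be a field of characteristic 2, θ a Tits endomorphism of K, δ ∈ K, L the splitting field of x² + x + δ over K with [L:K] = 2, and γ ∈ L a root. If θ extends to a Tits endomorphism θ₁ of L, then δ is a Tits trace of K: writing γ^{θ₁} = a + bγ with a, b ∈ K, one has b = 1 and δ = a^θ + a. -/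
/-- Let `K` be a field of characteristic 2, `θ` a Tits endomorphism of `K`, `δ ∈ K`,
`L` the splitting field of `x² + x + δ` over `K` with `[L : K] = 2`, and `γ ∈ L` a root
(so `γ ∉ K`). If `θ` extends to a Tits endomorphism `θ₁` of `L`, then `δ` is a Tits
trace of `K`: writing `θ₁ γ = a + bγ` with `a, b ∈ K`, one has `b = 1` and
`δ = a^θ + a`. -/
theorem tits_trace_of_extension {K L : Type*} [Field K] [CharP K 2] [Field L]
    [Algebra K L] (θ : K →+* K) (hθ : ∀ x : K, θ (θ x) = x ^ 2)
    (δ : K) (γ : L) (hγ : γ ^ 2 + γ + algebraMap K L δ = 0)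
    (hirr : γ ∉ Set.range (algebraMap K L))
    (hdim : Module.finrank K L = 2)
    (θ₁ : L →+* L) (hext : ∀ a : K, θ₁ (algebraMap K L a) = algebraMap K L (θ a))
    (hθ₁ : ∀ z : L, θ₁ (θ₁ z) = z ^ 2) :
    ∀ a b : K, θ₁ γ = algebraMap K L a + algebraMap K L b * γ →
      b = 1 ∧ δ = θ a + a := by
  intro a b hab
  have hinj : Function.Injective (algebraMap K L) := (algebraMap K L).injective
  -- independence of 1, γ
  have indep : ∀ x y : K, algebraMap K L x + algebraMap K L y * γ = 0 → x = 0 ∧ y = 0 := by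
    intro x y h
    by_cases hy : y = 0
    · subst hy
      simp at h
      exact ⟨hinj (by simpa using h), rfl⟩
    · exfalso
      apply hirr
      refine ⟨-x / y, ?_⟩
      have hy' : algebraMap K L y ≠ 0 := fun h0 => hy (hinj (by simpa using h0))
      rw [map_div₀, map_neg, div_eq_iff hy']
      linear_combination -h
  -- char 2 in L
  haveI : CharP L 2 := charP_of_injective_algebraMap hinj 2
  have two0 : (2 : L) = 0 := CharP.cast_eq_zero L 2
  have hsq : γ ^ 2 = γ + algebraMap K L δ := by
    linear_combination hγ - (γ + algebraMap K L δ) * two0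
  -- apply θ₁ to hab
  have key : γ + algebraMap K L δ =
      algebraMap K L (θ a) + algebraMap K L (θ b) * algebraMap K L a
        + algebraMap K L (θ b) * algebraMap K L b * γ := by
    have h := hθ₁ γ
    rw [hab, map_add, map_mul, hext, hext, hab, hsq] at h
    linear_combination -h
  have h0 : algebraMap K L (θ a + θ b * a - δ) + algebraMap K L (θ b * b - 1) * γ = 0 := by
    simp only [map_sub, map_add, map_mul, map_one]
    linear_combination -key
  obtain ⟨h1, h2⟩ := indep _ _ h0
  have hbb : θ b * b = 1 := by linear_combination h2
  have hbb' : b ^ 2 * θ b = 1 := by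
    have := congrArg θ hbb
    rwa [map_mul, hθ, map_one] at this
  have hb1 : b = 1 := by
    calc b = b * (θ b * b) := by rw [hbb, mul_one]
    _ = b ^ 2 * θ b := by ring
    _ = 1 := hbb'
  subst hb1
  rw [map_one, one_mul] at h1
  exact ⟨rfl, by linear_combination -h1⟩
end

section
/- Let K be a field of characteristic 2, θ a Tits endomorphism of K, L = K(γ) a quadratic extension where γ² + γ + δ = 0 with δ ∈ K, and χ the nontrivial element of Gal(L/K). If θ₁ is a Tits endomorphism of L extending θ, then θ₁ commutes with χ, and χ∘θ₁ is also a Tits endomorphism of L extending θ; moreover these are the only two extensions of θ to a Tits endomorphism of L. -/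
/-- Let `K` be a field of characteristic 2, `θ` a Tits endomorphism of `K`, and
`L = K(γ)` a quadratic extension where `γ² + γ + δ = 0` with `δ ∈ K` (so `γ ∉ K` and
every element of `L` is of the form `a + bγ`). Let `χ` be the nontrivial element of
`Gal(L/K)` (so `χ γ = γ + 1`). If `θ₁` is a Tits endomorphism of `L` extending `θ`,
then `θ₁` commutes with `χ`, `χ ∘ θ₁` is also a Tits endomorphism of `L` extending `θ`,
and these are the only two extensions of `θ` to a Tits endomorphism of `L`. -/
theorem tits_extensions_pair {K L : Type*} [Field K] [CharP K 2] [Field L]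
    [Algebra K L] (θ : K →+* K) (hθ : ∀ x : K, θ (θ x) = x ^ 2)
    (δ : K) (γ : L) (hγ : γ ^ 2 + γ + algebraMap K L δ = 0)
    (hirr : γ ∉ Set.range (algebraMap K L))
    (hspan : ∀ z : L, ∃ a b : K, z = algebraMap K L a + algebraMap K L b * γ)
    (χ : L →+* L) (hχK : ∀ a : K, χ (algebraMap K L a) = algebraMap K L a)
    (hχγ : χ γ = γ + 1)
    (θ₁ : L →+* L) (hext : ∀ a : K, θ₁ (algebraMap K L a) = algebraMap K L (θ a))
    (hθ₁ : ∀ z : L, θ₁ (θ₁ z) = z ^ 2) :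
    (∀ z : L, θ₁ (χ z) = χ (θ₁ z)) ∧
    (∀ a : K, (χ.comp θ₁) (algebraMap K L a) = algebraMap K L (θ a)) ∧
    (∀ z : L, (χ.comp θ₁) ((χ.comp θ₁) z) = z ^ 2) ∧
    (∀ θ₂ : L →+* L,
      (∀ a : K, θ₂ (algebraMap K L a) = algebraMap K L (θ a)) →
      (∀ z : L, θ₂ (θ₂ z) = z ^ 2) → θ₂ = θ₁ ∨ θ₂ = χ.comp θ₁) := by
  have hinj : Function.Injective (algebraMap K L) := (algebraMap K L).injective
  have h2K : (2 : K) = 0 := by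
    have := CharP.cast_eq_zero K 2
    exact_mod_cast this
  have h2 : (2 : L) = 0 := by
    have h' : (2 : L) = algebraMap K L 2 := by rw [map_ofNat]
    rw [h', h2K, map_zero]
  -- uniqueness of representation
  have huniq : ∀ a b : K, algebraMap K L a + algebraMap K L b * γ = 0 → a = 0 ∧ b = 0 := by
    intro a b h
    by_cases hb : b = 0
    · subst hb
      simp only [map_zero, zero_mul, add_zero] at h
      exact ⟨hinj (by simpa using h), rfl⟩
    · exfalso
      apply hirr
      refine ⟨a / b, ?_⟩
      have hb' : algebraMap K L b ≠ 0 := fun h0 => hb (hinj (by simpa using h0))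
      rw [map_div₀]
      field_simp
      linear_combination h - algebraMap K L b * γ * h2
  have heq : ∀ a b c d : K, algebraMap K L a + algebraMap K L b * γ
      = algebraMap K L c + algebraMap K L d * γ → a = c ∧ b = d := by
    intro a b c d h
    have h' := huniq (a - c) (b - d) (by rw [map_sub, map_sub]; linear_combination h)
    exact ⟨sub_eq_zero.mp h'.1, sub_eq_zero.mp h'.2⟩
  have hγ2 : γ ^ 2 = γ + algebraMap K L δ := by
    linear_combination hγ - (γ + algebraMap K L δ) * h2
  -- any Tits extension sends γ to γ + α with θ α + α = δ
  have key : ∀ f : L →+* L, (∀ a : K, f (algebraMap K L a) = algebraMap K L (θ a)) →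
      (∀ z : L, f (f z) = z ^ 2) →
      ∃ α : K, θ α + α = δ ∧ f γ = γ + algebraMap K L α := by
    intro f hfK hf
    obtain ⟨α, β, hfγ⟩ := hspan (f γ)
    have hsq : algebraMap K L (θ α + θ β * α) + algebraMap K L (θ β * β) * γ
        = algebraMap K L δ + algebraMap K L 1 * γ := by
      have h1 : f (f γ) = γ ^ 2 := hf γ
      rw [hfγ, map_add, map_mul, hfK, hfK, hfγ] at h1
      rw [hγ2] at h1
      rw [map_add, map_mul, map_mul, map_one]
      linear_combination h1
    obtain ⟨hA, hB⟩ := heq _ _ _ _ hsq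
    have hβne : β ≠ 0 := by
      intro h0; rw [h0, mul_zero] at hB; exact one_ne_zero hB.symm
    have hθβ : θ β = β⁻¹ := by
      field_simp
      linear_combination hB
    have hβ1 : β = 1 := by
      have h1 : θ (θ β) * θ β = 1 := by rw [← map_mul, hB, map_one]
      rw [hθ, hθβ] at h1
      field_simp at h1
      have := mul_left_cancel₀ hβne (by rw [mul_one]; linear_combination β * h1 : β * β = β * 1)
      exact this
    refine ⟨α, ?_, ?_⟩
    · rw [hβ1, map_one, one_mul] at hA; linear_combination hA
    · rw [hfγ, hβ1, map_one, one_mul]; ring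
  obtain ⟨α, hαeq, hθ₁γ⟩ := key θ₁ hext hθ₁
  have hcomm : ∀ z : L, θ₁ (χ z) = χ (θ₁ z) := by
    intro z
    obtain ⟨a, b, rfl⟩ := hspan z
    simp only [map_add, map_mul, map_one, hext, hχK, hχγ, hθ₁γ]
    ring
  have hχχ : ∀ z : L, χ (χ z) = z := by
    intro z
    obtain ⟨a, b, rfl⟩ := hspan z
    simp only [map_add, map_mul, map_one, hχK, hχγ]
    linear_combination algebraMap K L b * h2
  refine ⟨hcomm, ?_, ?_, ?_⟩
  · intro a; simp [RingHom.comp_apply, hext, hχK]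
  · intro z
    simp only [RingHom.comp_apply]
    rw [hcomm (θ₁ z), hχχ, hθ₁]
  · intro θ₂ hext2 hsq2
    obtain ⟨α₂, hα₂eq, hθ₂γ⟩ := key θ₂ hext2 hsq2
    have hdet : ∀ f g : L →+* L, (∀ a : K, f (algebraMap K L a) = g (algebraMap K L a)) →
        f γ = g γ → f = g := by
      intro f g hK hg
      ext z
      obtain ⟨a, b, rfl⟩ := hspan z
      simp only [map_add, map_mul, hK, hg]
    have hu : θ (α + α₂) = α + α₂ := by
      rw [map_add]
      linear_combination hαeq + hα₂eq + (δ - α - α₂) * h2K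
    have hu2 : (α + α₂) ^ 2 = α + α₂ := by
      have h := hθ (α + α₂); rw [hu, hu] at h; exact h.symm
    rcases mul_eq_zero.mp (show (α + α₂) * ((α + α₂) - 1) = 0 by linear_combination hu2)
      with h0 | h1
    · left
      refine hdet θ₂ θ₁ (fun a => by rw [hext2, hext]) ?_
      have hα : α₂ = α := by linear_combination h0 - α * h2K
      rw [hθ₂γ, hθ₁γ, hα]
    · right
      refine hdet θ₂ (χ.comp θ₁) (fun a => by simp [RingHom.comp_apply, hext2, hext, hχK]) ?_
      have hα : α₂ = α + 1 := by linear_combination h1 - α * h2K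
      rw [hθ₂γ, RingHom.comp_apply, hθ₁γ, map_add, hχγ, hχK, hα, map_add, map_one]
      ring
end

section
/- Let K = F₂(α, β) be a purely transcendental extension of F₂ in two variables, and let θ be the unique Tits endomorphism of K with β^θ = α (and hence α^θ = β²). Then β is not a Tits trace: there is no g ∈ K with β = g^θ + g. -/
open MvPolynomial

set_option maxHeartbeats 1000000 in
set_option synthInstance.maxHeartbeats 400000 in
/-- Let `K = F₂(α, β)` be a purely transcendental extension of `F₂` in two variables
(realized as the fraction field of `F₂[α, β]`), and let `θ` be the unique Tits
endomorphism of `K` with `β^θ = α` (and hence `α^θ = β²`). Then `β` is not a Tits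
trace: there is no `g ∈ K` with `β = g^θ + g`. -/
theorem beta_not_tits_trace
    (θ : FractionRing (MvPolynomial (Fin 2) (ZMod 2)) →+*
         FractionRing (MvPolynomial (Fin 2) (ZMod 2)))
    (hθ : ∀ x, θ (θ x) = x ^ 2)
    (hα : θ (algebraMap (MvPolynomial (Fin 2) (ZMod 2)) _ (X 0))
        = (algebraMap (MvPolynomial (Fin 2) (ZMod 2)) _ (X 1)) ^ 2)
    (hβ : θ (algebraMap (MvPolynomial (Fin 2) (ZMod 2)) _ (X 1))
        = algebraMap (MvPolynomial (Fin 2) (ZMod 2)) _ (X 0)) :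
    ¬ ∃ g : FractionRing (MvPolynomial (Fin 2) (ZMod 2)),
        algebraMap (MvPolynomial (Fin 2) (ZMod 2)) _ (X 1) = θ g + g := by
  haveI : CharP (FractionRing (MvPolynomial (Fin 2) (ZMod 2))) 2 :=
    charP_of_injective_algebraMap
      (IsFractionRing.injective (MvPolynomial (Fin 2) (ZMod 2))
        (FractionRing (MvPolynomial (Fin 2) (ZMod 2)))) 2
  rintro ⟨g, hg⟩
  have hg2 : algebraMap (MvPolynomial (Fin 2) (ZMod 2)) _ (X 0) = g ^ 2 + θ g := by
    have h := congrArg θ hg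
    rw [hβ, θ.map_add, hθ] at h
    exact h
  have hself : θ g + θ g = 0 := CharTwo.add_self_eq_zero _
  have key : g ^ 2 + g
      = algebraMap (MvPolynomial (Fin 2) (ZMod 2)) _ (X 0)
        + algebraMap (MvPolynomial (Fin 2) (ZMod 2)) _ (X 1) := by
    rw [hg2, hg]; linear_combination -hself
  -- g is integral over the polynomial ring
  have hint : IsIntegral (MvPolynomial (Fin 2) (ZMod 2)) g := by
    refine ⟨Polynomial.X ^ 2 + (Polynomial.X + Polynomial.C (X 0 + X 1)), ?_, ?_⟩
    · exact Polynomial.monic_X_pow_add (by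
        refine lt_of_le_of_lt (Polynomial.degree_add_le _ _) ?_
        simp only [Polynomial.degree_X]
        refine max_lt ?_ (lt_of_le_of_lt (Polynomial.degree_C_le) ?_) <;> norm_num)
    · show Polynomial.eval₂ _ g _ = 0
      rw [Polynomial.eval₂_add, Polynomial.eval₂_add, Polynomial.eval₂_pow,
        Polynomial.eval₂_X, Polynomial.eval₂_C, map_add]
      rw [← add_assoc, key]
      exact CharTwo.add_self_eq_zero _
  obtain ⟨p, hp⟩ := IsIntegrallyClosed.isIntegral_iff.mp hint
  -- push the equation into the polynomial ring
  have hpR : p ^ 2 + p = X 0 + X 1 := by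
    apply IsFractionRing.injective (MvPolynomial (Fin 2) (ZMod 2))
      (FractionRing (MvPolynomial (Fin 2) (ZMod 2)))
    rw [map_add, map_add, map_pow, hp]
    exact key
  -- specialize to one variable: X 0 ↦ X, X 1 ↦ 0
  have hq : (MvPolynomial.aeval (![Polynomial.X, 0] : Fin 2 → Polynomial (ZMod 2)) p) ^ 2
      + (MvPolynomial.aeval (![Polynomial.X, 0] : Fin 2 → Polynomial (ZMod 2)) p)
      = Polynomial.X := by
    have h := congrArg (MvPolynomial.aeval (![Polynomial.X, 0] : Fin 2 → Polynomial (ZMod 2))) hpR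
    simpa using h
  set q : Polynomial (ZMod 2) :=
    MvPolynomial.aeval (![Polynomial.X, 0] : Fin 2 → Polynomial (ZMod 2)) p with hq_def
  -- degree argument
  rcases Nat.eq_zero_or_pos q.natDegree with h0 | hpos
  · obtain ⟨c, hc⟩ := Polynomial.natDegree_eq_zero.mp h0
    rw [← hc] at hq
    have hcc : c ^ 2 + c = 0 := by
      have : ∀ x : ZMod 2, x ^ 2 + x = 0 := by decide
      exact this c
    rw [← Polynomial.C_pow, ← Polynomial.C_add, hcc, map_zero] at hq
    exact Polynomial.X_ne_zero hq.symm
  · have hqne : q ≠ 0 := fun h => by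
      rw [h] at hq; simp at hq; exact Polynomial.X_ne_zero hq.symm
    have hdpow : (q ^ 2).natDegree = 2 * q.natDegree :=
      Polynomial.natDegree_pow' (by
        simp [pow_eq_zero_iff, Polynomial.leadingCoeff_ne_zero.mpr hqne])
    have hlt : q.natDegree < (q ^ 2).natDegree := by omega
    have hfin : (q ^ 2 + q).natDegree = 2 * q.natDegree := by
      rw [Polynomial.natDegree_add_eq_left_of_natDegree_lt hlt, hdpow]
    rw [hq, Polynomial.natDegree_X] at hfin
    omega
end

section
/- Let P = (K, V, q, θ, t ↦ [t], ·) be a polarity algebra. Then for all u, v, w ∈ V: v·(w·u) = f(u, v·w)·u + f(u,v)·(u·w) + q(u)·(v·w), where f = ∂q is the bilinear form associated to q. -/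
open QuadraticMap

/-- A polarity algebra (De Medts–Segev–Weiss): a field `K` of characteristic 2, an
anisotropic quadratic space `(K, V, q)` whose polar form `f = ∂q` is not identically
zero, a Tits endomorphism `θ` of `K`, a `K`-linear embedding `t ↦ [t]` of the twisted
vector space `[K^θ]` (with scalar action `a • [t] = [a^θ t]`) into the radical of `f`,
and a multiplication on `V` satisfying the axioms (R1)–(R7). -/
structure PolarityAlgebra (K V : Type*) [Field K] [CharP K 2]
    [AddCommGroup V] [Module K V] where
  q : QuadraticForm K V
  anisotropic : q.Anisotropic
  f_ne_zero : ∃ u v : V, polar q u v ≠ 0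
  θ : K →+* K
  tits : ∀ t : K, θ (θ t) = t ^ 2
  br : K → V
  br_add : ∀ s t : K, br (s + t) = br s + br t
  br_smul : ∀ a t : K, a • br t = br (θ a * t)
  br_inj : Function.Injective br
  br_rad : ∀ (t : K) (v : V), polar q (br t) v = 0
  mul : V → V → V
  R1 : ∀ v : V, IsLinearMap K fun x => mul x v
  R2 : ∀ (t : K) (v : V), mul v (br t) = t • v
  R3 : ∀ (t : K) (u v : V), mul u (t • v) = θ t • mul u v
  R4 : ∀ (t : K) (v : V), mul (br t) v = br (t * q v)
  R5 : ∀ u v : V, mul (mul u v) v = θ (q v) • u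
  R6 : ∀ u v : V, mul v (mul u v) = q v • mul v u
  R7 : ∀ u v w : V, mul u (v + w) = mul u v + mul u w + br (polar q (mul v u) w)

variable {K V : Type*} [Field K] [CharP K 2] [AddCommGroup V] [Module K V]

namespace PolarityAlgebraAux

lemma addV (K : Type*) [Field K] [CharP K 2] {V : Type*} [AddCommGroup V] [Module K V]
    (x : V) : x + x = 0 := by
  have h : (2 : K) • x = x + x := two_smul K x
  rw [CharTwo.two_eq_zero, zero_smul] at h
  exact h.symm

lemma negSmul (K : Type*) [Field K] [CharP K 2] {V : Type*} [AddCommGroup V] [Module K V]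
    (c : K) (z : V) : -(c • z) = c • z := by
  rw [← neg_smul, CharTwo.neg_eq c]

variable (P : PolarityAlgebra K V)

lemma br_zero : P.br 0 = 0 := by
  have h := P.br_add 0 0
  rw [add_zero] at h
  exact left_eq_add.mp h

lemma mul_zero_right (x : V) : P.mul x 0 = 0 := by
  have h := P.R2 0 x
  rw [br_zero, zero_smul] at h
  exact h

lemma mul_zero_left (y : V) : P.mul 0 y = 0 := (P.R1 y).map_zero

/-- `f(a·x, a) = 0`. -/
lemma fmul_self (a x : V) : polar P.q (P.mul a x) a = 0 := by
  have h := P.R7 x a a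
  rw [addV K a, mul_zero_right, addV K (P.mul x a), zero_add] at h
  have hb : P.br (polar P.q (P.mul a x) a) = P.br 0 := by
    rw [br_zero]; exact h.symm
  exact P.br_inj hb

lemma fmul_self' (a x : V) : polar P.q a (P.mul a x) = 0 := by
  rw [polar_comm]; exact fmul_self P a x

lemma theta_ne_zero {c : K} (hc : c ≠ 0) : P.θ c ≠ 0 := by
  intro h
  exact hc (P.θ.injective (by rw [h, map_zero]))

lemma q_ne_zero {c : V} (hc : c ≠ 0) : P.q c ≠ 0 := fun h => hc (P.anisotropic _ h)

/-- Right multiplication is self-adjoint: `f(x, y·c) = f(x·c, y)`. -/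
lemma adj (x y c : V) : polar P.q x (P.mul y c) = polar P.q (P.mul x c) y := by
  rcases eq_or_ne c 0 with rfl | hc
  · rw [mul_zero_right, mul_zero_right, polar_zero_right, polar_zero_left]
  · have hθ : P.θ (P.q c) ≠ 0 := theta_ne_zero P (q_ne_zero P hc)
    have h6 := P.R6 (x + y) c
    have hxy : P.mul (x + y) c = P.mul x c + P.mul y c := (P.R1 c).map_add x y
    have e1 : P.mul c (P.mul (x + y) c)
        = P.q c • P.mul c x + P.q c • P.mul c y
          + P.br (P.θ (P.q c) * polar P.q x (P.mul y c)) := by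
      rw [hxy, P.R7 c (P.mul x c) (P.mul y c), P.R6 x c, P.R6 y c, P.R5 x c,
        polar_smul_left, smul_eq_mul]
    have e2 : P.q c • P.mul c (x + y)
        = P.q c • P.mul c x + P.q c • P.mul c y
          + P.br (P.θ (P.q c) * polar P.q (P.mul x c) y) := by
      rw [P.R7 c x y, smul_add, smul_add, P.br_smul]
    rw [e1, e2] at h6
    exact mul_left_cancel₀ hθ (P.br_inj (add_left_cancel h6))

/-- Expansion of `x·(A + B + [s])`. -/
lemma exp3 (x A B : V) (s : K) :
    P.mul x (A + B + P.br s)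
      = P.mul x A + P.mul x B + s • x + P.br (polar P.q (P.mul A x) B) := by
  have h1 := P.R7 x (A + B) (P.br s)
  have h2 : polar P.q (P.mul (A + B) x) (P.br s) = 0 := by
    rw [polar_comm]; exact P.br_rad s _
  rw [h2, br_zero, add_zero, P.R7 x A B, P.R2 s x] at h1
  rw [h1]; abel

/-- The linearization of (R6): the symmetrized form of the target identity. -/
lemma Ssum (u v w : V) :
    P.mul v (P.mul w u) + P.mul u (P.mul w v)
      = polar P.q u v • P.mul u w + polar P.q u v • P.mul v w
        + P.q u • P.mul v w + P.q v • P.mul u w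
        - polar P.q (P.mul u w) v • u - polar P.q (P.mul u w) v • v := by
  have h0 := P.R6 w (u + v)
  rw [P.R7 w u v] at h0
  have hB : P.mul (u + v) (P.mul w u + P.mul w v + P.br (polar P.q (P.mul u w) v))
      = P.mul u (P.mul w u + P.mul w v + P.br (polar P.q (P.mul u w) v))
        + P.mul v (P.mul w u + P.mul w v + P.br (polar P.q (P.mul u w) v)) :=
    (P.R1 _).map_add u v
  have hR : P.mul (u + v) w = P.mul u w + P.mul v w := (P.R1 w).map_add u v
  rw [hB, exp3 P u, exp3 P v, P.R5 w u, polar_smul_left, fmul_self' P w v, smul_zero,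
    br_zero, add_zero, ← adj P (P.mul w u) (P.mul w v) v, P.R5 w v, polar_smul_right,
    fmul_self P w u, smul_zero, br_zero, add_zero, P.R6 w u, P.R6 w v,
    QuadraticMap.map_add (⇑P.q) u v, hR] at h0
  linear_combination (norm := module) h0

/-- The "defect" of the target identity. -/
def Sdef (P : PolarityAlgebra K V) (u v w : V) : V :=
  P.mul v (P.mul w u)
    - (polar P.q u (P.mul v w) • u + polar P.q u v • P.mul u w + P.q u • P.mul v w)

lemma Sdef_sum (u v w : V) : Sdef P u v w + Sdef P v u w = 0 := by
  have e1 : polar P.q u (P.mul v w) = polar P.q (P.mul u w) v := adj P u v w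
  have e2 : polar P.q v (P.mul u w) = polar P.q (P.mul u w) v :=
    (adj P v u w).trans ((polar_comm (⇑P.q) (P.mul v w) u).trans (adj P u v w))
  have e3 : polar P.q v u = polar P.q u v := polar_comm (⇑P.q) v u
  have h := Ssum P u v w
  rw [sub_eq_add_neg, sub_eq_add_neg, negSmul K, negSmul K] at h
  unfold Sdef
  rw [e1, e2, e3]
  linear_combination (norm := module) h

lemma Sdef_smul2 (t : K) (u v w : V) : Sdef P u (t • v) w = t • Sdef P u v w := by
  unfold Sdef
  rw [(P.R1 (P.mul w u)).map_smul t v, (P.R1 w).map_smul t v, polar_smul_right,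
    polar_smul_right, smul_eq_mul, smul_eq_mul]
  module

lemma Sdef_smul1 (t : K) (u v w : V) : Sdef P (t • u) v w = (t * t) • Sdef P u v w := by
  unfold Sdef
  rw [P.R3 t w u, P.R3 (P.θ t) v (P.mul w u), P.tits t, polar_smul_left, polar_smul_left,
    smul_eq_mul, smul_eq_mul, P.q.map_smul t u, smul_eq_mul, (P.R1 w).map_smul t u]
  module

lemma exists_t (P : PolarityAlgebra K V) : ∃ t : K, t * t ≠ t := by
  by_contra h
  push_neg at h
  have hval : ∀ t : K, t = 0 ∨ t = 1 := by
    intro t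
    have h2 : t * (t - 1) = 0 := by linear_combination h t
    rcases mul_eq_zero.mp h2 with h' | h'
    · exact Or.inl h'
    · exact Or.inr (sub_eq_zero.mp h')
  obtain ⟨x, y, hxy⟩ := P.f_ne_zero
  have hx0 : x ≠ 0 := by
    rintro rfl; rw [polar_zero_left] at hxy; exact hxy rfl
  have hxe : x ≠ P.br 1 := by
    rintro rfl; exact hxy (P.br_rad 1 y)
  have he0 : P.br 1 ≠ 0 := by
    intro h0
    have hb : P.br 1 = P.br 0 := by rw [br_zero]; exact h0
    exact one_ne_zero (P.br_inj hb)
  have hq1 : ∀ z : V, z ≠ 0 → P.q z = 1 := by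
    intro z hz
    rcases hval (P.q z) with h' | h'
    · exact absurd (P.anisotropic _ h') hz
    · exact h'
  have hxe0 : x + P.br 1 ≠ 0 := by
    intro h0
    exact hxe (add_right_cancel (h0.trans (addV K (P.br 1)).symm))
  have hpol : polar P.q x (P.br 1) = 0 := by
    rw [polar_comm]; exact P.br_rad 1 x
  have hadd : P.q (x + P.br 1) = P.q x + P.q (P.br 1) + polar P.q x (P.br 1) :=
    QuadraticMap.map_add (⇑P.q) x (P.br 1)
  rw [hq1 _ hxe0, hq1 _ hx0, hq1 _ he0, hpol, add_zero] at hadd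
  exact one_ne_zero (left_eq_add.mp hadd)

lemma Sdef_eq_zero (u v w : V) : Sdef P u v w = 0 := by
  obtain ⟨t, ht⟩ := exists_t P
  have h4 : Sdef P v u w = - Sdef P u v w := by
    have := Sdef_sum P v u w
    linear_combination (norm := module) this
  have e : t • Sdef P u v w = (t * t) • Sdef P u v w := by
    calc t • Sdef P u v w = Sdef P u (t • v) w := (Sdef_smul2 P t u v w).symm
      _ = - Sdef P (t • v) u w := eq_neg_of_add_eq_zero_left (Sdef_sum P u (t • v) w)
      _ = - ((t * t) • Sdef P v u w) := by rw [Sdef_smul1]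
      _ = - ((t * t) • (- Sdef P u v w)) := by rw [h4]
      _ = (t * t) • Sdef P u v w := by rw [smul_neg, neg_neg]
  have key : (t * t - t) • Sdef P u v w = 0 := by
    rw [sub_smul, ← e, sub_self]
  exact (smul_eq_zero.mp key).resolve_left (sub_ne_zero.mpr ht)

end PolarityAlgebraAux

open PolarityAlgebraAux in
/-- In a polarity algebra, `v·(w·u) = f(u, v·w)u + f(u,v)(u·w) + q(u)(v·w)`. -/
theorem polarityAlgebra_mul_identity (P : PolarityAlgebra K V) (u v w : V) :
    P.mul v (P.mul w u)
      = polar P.q u (P.mul v w) • u + polar P.q u v • P.mul u w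
        + P.q u • P.mul v w := by
  have h := Sdef_eq_zero P u v w
  unfold Sdef at h
  exact sub_eq_zero.mp h
end

section
/- Let P = (K, V, q, θ, t ↦ [t], ·) be a polarity algebra. Then q(u·v) = q(u)·q(v)^θ for all u, v ∈ V. -/
open QuadraticMap

variable {K V : Type*} [Field K] [CharP K 2] [AddCommGroup V] [Module K V]


lemma PA.mul_zero (P : PolarityAlgebra K V) (u : V) : P.mul u 0 = 0 := by
  have h := P.R3 0 u 0
  simpa using h

lemma PA.zero_mul (P : PolarityAlgebra K V) (v : V) : P.mul 0 v = 0 :=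
  (P.R1 v).map_zero

lemma PA.theta_ne (P : PolarityAlgebra K V) {t : K} (ht : t ≠ 0) : P.θ t ≠ 0 :=
  fun h => ht (P.θ.injective (by rw [h, map_zero]))

omit [CharP K 2] in
lemma PA.smul_cancel {s t : K} {v : V} (hv : v ≠ 0) (h : s • v = t • v) : s = t := by
  have h' : (s - t) • v = 0 := by rw [sub_smul, h, sub_self]
  rcases smul_eq_zero.mp h' with h0 | h0
  · exact sub_eq_zero.mp h0
  · exact absurd h0 hv

lemma PA.mulI (P : PolarityAlgebra K V) (u v : V) (hv : v ≠ 0) :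
    P.mul (P.mul u v) (P.mul v u) = P.q (P.mul u v) • u := by
  have hqv : P.q v ≠ 0 := fun h => hv (P.anisotropic v h)
  have hθ : P.θ (P.q v) ≠ 0 := PA.theta_ne P hqv
  have h1 : P.mul (P.mul u v) (P.mul v (P.mul u v))
      = P.θ (P.q v) • P.mul (P.mul u v) (P.mul v u) := by
    rw [P.R6 u v, P.R3]
  have h2 : P.mul (P.mul u v) (P.mul v (P.mul u v))
      = P.q (P.mul u v) • (P.θ (P.q v) • u) := by
    rw [P.R6 v (P.mul u v), P.R5]
  have h3 : P.θ (P.q v) • P.mul (P.mul u v) (P.mul v u)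
      = P.θ (P.q v) • (P.q (P.mul u v) • u) := by
    rw [← h1, h2, smul_comm]
  exact smul_right_injective V hθ h3

lemma PA.idA (P : PolarityAlgebra K V) (u v : V) (hu : u ≠ 0) (hv : v ≠ 0) :
    P.q v * P.q (P.mul v u) = P.θ (P.q (P.mul u v)) := by
  have h1 := P.R5 v (P.mul u v)
  rw [P.R6 u v, (P.R1 (P.mul u v)).map_smul, PA.mulI P v u hu, smul_smul] at h1
  exact PA.smul_cancel hv h1

/-- In a polarity algebra, the quadratic form is multiplicative with a twist:
`q(u·v) = q(u) q(v)^θ`. -/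
theorem polarityAlgebra_q_mul (P : PolarityAlgebra K V) (u v : V) :
    P.q (P.mul u v) = P.q u * P.θ (P.q v) := by
  by_cases hv : v = 0
  · subst hv; simp [PA.mul_zero]
  by_cases hu : u = 0
  · subst hu; simp [PA.zero_mul]
  have hqv : P.q v ≠ 0 := fun h => hv (P.anisotropic v h)
  have hθ : P.θ (P.q v) ≠ 0 := PA.theta_ne P hqv
  have hA := PA.idA P u v hu hv
  have hB := PA.idA P v u hv hu
  have hsq : P.q (P.mul u v) ^ 2
      = P.θ (P.q v) * (P.q u * P.q (P.mul u v)) := by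
    calc P.q (P.mul u v) ^ 2 = P.θ (P.θ (P.q (P.mul u v))) := (P.tits _).symm
      _ = P.θ (P.q v * P.q (P.mul v u)) := by rw [hA]
      _ = P.θ (P.q v) * P.θ (P.q (P.mul v u)) := map_mul _ _ _
      _ = P.θ (P.q v) * (P.q u * P.q (P.mul u v)) := by rw [hB]
  have hne : P.q (P.mul u v) ≠ 0 := by
    intro h0
    have hz : P.mul u v = 0 := P.anisotropic _ h0
    have h5 := P.R5 u v
    rw [hz, PA.zero_mul] at h5
    rcases smul_eq_zero.mp h5.symm with h | h
    · exact hθ h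
    · exact hu h
  have hfin : P.q (P.mul u v) * P.q (P.mul u v)
      = (P.q u * P.θ (P.q v)) * P.q (P.mul u v) := by
    linear_combination hsq
  exact mul_right_cancel₀ hne hfin
end

section
/- Let P = (K, V, q, θ, t ↦ [t], ·) be a polarity algebra. Then q([t]) = t^θ for all t ∈ K. -/
open QuadraticMap

variable {K V : Type*} [Field K] [CharP K 2] [AddCommGroup V] [Module K V]

/-- In a polarity algebra, `q([t]) = t^θ` for all `t ∈ K`. -/
theorem polarityAlgebra_q_br (P : PolarityAlgebra K V) (t : K) :
    P.q (P.br t) = P.θ t := by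
  obtain ⟨u, v, huv⟩ := P.f_ne_zero
  have hu : u ≠ 0 := by
    rintro rfl
    simp [polar] at huv
  have h5 := P.R5 u (P.br t)
  rw [P.R2] at h5
  rw [P.R2, smul_smul, ← _root_.sq, ← P.tits t] at h5
  have := smul_left_injective K hu h5.symm
  exact P.θ.injective this
end

section
/- Let P = (K, V, q, θ, t ↦ [t], ·) be a polarity algebra with polar form f. Then f(u·v, u·w) = f(v, w·u)^θ + q(u)·f(v,w)^θ for all u, v, w ∈ V. -/
open QuadraticMap

variable {K V : Type*} [Field K] [CharP K 2] [AddCommGroup V] [Module K V]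

namespace PolarityAlgebra

variable (P : PolarityAlgebra K V)

include P in
lemma exists_ne_zero : ∃ u : V, u ≠ 0 := by
  obtain ⟨u, v, h⟩ := P.f_ne_zero
  refine ⟨u, fun hu => h ?_⟩
  simp [hu, polar]

omit [CharP K 2] in
lemma smul_cancel {a b : K} {x : V} (hx : x ≠ 0) (h : a • x = b • x) : a = b := by
  have h0 : (a - b) • x = 0 := by rw [sub_smul, h, sub_self]
  rcases smul_eq_zero.mp h0 with h1 | h1
  · exact sub_eq_zero.mp h1
  · exact absurd h1 hx

lemma theta_inj : Function.Injective P.θ := P.θ.injective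

lemma q_ne_zero {v : V} (hv : v ≠ 0) : P.q v ≠ 0 := fun h => hv (P.anisotropic v h)

lemma theta_ne_zero {a : K} (ha : a ≠ 0) : P.θ a ≠ 0 := fun h =>
  ha (P.theta_inj (by rw [h, map_zero]))

lemma mul_zero_left (v : V) : P.mul 0 v = 0 := (P.R1 v).map_zero

lemma mul_zero_right (u : V) : P.mul u 0 = 0 := by
  have h := P.R3 0 u 0
  simpa using h

lemma q_br (t : K) : P.q (P.br t) = P.θ t := by
  obtain ⟨u, hu⟩ := P.exists_ne_zero
  have h5 := P.R5 u (P.br t)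
  rw [P.R2, P.R2, smul_smul] at h5
  have h2 : t * t = P.θ (P.θ t) := by rw [P.tits, pow_two]
  rw [h2] at h5
  exact (P.theta_inj (smul_cancel hu h5)).symm

lemma polar_sym (u v w : V) :
    polar P.q (P.mul v u) w = polar P.q (P.mul w u) v := by
  apply P.br_inj
  have h2 := P.R7 u w v
  rw [add_comm w v, P.R7 u v w, add_comm (P.mul u w) (P.mul u v)] at h2
  exact add_left_cancel h2

lemma mul_eq_zero_of {u v : V} (hv : v ≠ 0) (h : P.mul u v = 0) : u = 0 := by
  have h5 := P.R5 u v
  rw [h, P.mul_zero_left] at h5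
  rcases smul_eq_zero.mp h5.symm with h1 | h1
  · exact absurd h1 (P.theta_ne_zero (P.q_ne_zero hv))
  · exact h1

lemma key1 {v : V} (u : V) (hv : v ≠ 0) :
    P.mul (P.mul u v) (P.mul v u) = P.q (P.mul u v) • u := by
  have h6 := P.R6 v (P.mul u v)
  rw [P.R6 u v, P.R3, P.R5] at h6
  have hq : P.θ (P.q v) ≠ 0 := P.theta_ne_zero (P.q_ne_zero hv)
  rw [smul_comm (P.q (P.mul u v)) (P.θ (P.q v)) u] at h6
  exact smul_right_injective V hq h6

lemma key2 {u v : V} (hu : u ≠ 0) (hv : v ≠ 0) :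
    P.q v * P.q (P.mul v u) = P.θ (P.q (P.mul u v)) := by
  have h5 := P.R5 v (P.mul u v)
  rw [P.R6 u v, (P.R1 (P.mul u v)).map_smul, P.key1 v hu, smul_smul] at h5
  exact smul_cancel hv h5

lemma q_mul (u v : V) : P.q (P.mul u v) = P.q u * P.θ (P.q v) := by
  by_cases hu : u = 0
  · simp [hu, P.mul_zero_left]
  by_cases hv : v = 0
  · simp [hv, P.mul_zero_right]
  have huv : P.mul u v ≠ 0 := fun h => hu (P.mul_eq_zero_of hv h)
  have hq : P.q (P.mul u v) ≠ 0 := P.q_ne_zero huv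
  have e1 := P.key2 hu hv
  have e2 := P.key2 hv hu
  have e3 : P.θ (P.q v) * P.θ (P.q (P.mul v u)) = P.q (P.mul u v) ^ 2 := by
    rw [← map_mul, e1, P.tits]
  rw [← e2] at e3
  have e4 : (P.q u * P.θ (P.q v)) * P.q (P.mul u v)
      = P.q (P.mul u v) * P.q (P.mul u v) := by
    rw [← pow_two, ← e3]; ring
  exact (mul_right_cancel₀ hq e4).symm

end PolarityAlgebra

/-- In a polarity algebra, `f(u·v, u·w) = f(v, w·u)^θ + q(u) f(v,w)^θ`. -/
theorem polarityAlgebra_polar_mul_left (P : PolarityAlgebra K V) (u v w : V) :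
    polar P.q (P.mul u v) (P.mul u w)
      = P.θ (polar P.q v (P.mul w u)) + P.q u * P.θ (polar P.q v w) := by
  set t : K := polar P.q (P.mul v u) w with ht
  have lhs : P.q (P.mul u (v + w))
      = P.q u * P.θ (P.q v) + P.q u * P.θ (P.q w) + P.q u * P.θ (polar P.q v w) := by
    rw [P.q_mul, QuadraticMap.map_add (⇑P.q) v w, map_add, map_add, mul_add, mul_add]
  have hr : polar P.q (P.mul u v + P.mul u w) (P.br t) = 0 :=
    (polar_comm _ _ _).trans (P.br_rad t _)
  have rhs : P.q (P.mul u (v + w))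
      = P.q u * P.θ (P.q v) + P.q u * P.θ (P.q w)
        + (polar P.q (P.mul u v) (P.mul u w) + P.θ t) := by
    rw [P.R7, QuadraticMap.map_add (⇑P.q) (P.mul u v + P.mul u w) (P.br t),
      QuadraticMap.map_add (⇑P.q) (P.mul u v) (P.mul u w), P.q_br, hr,
      P.q_mul u v, P.q_mul u w]
    ring
  have hkey : P.q u * P.θ (polar P.q v w)
      = polar P.q (P.mul u v) (P.mul u w) + P.θ t := by
    have h := lhs.symm.trans rhs
    rw [add_assoc, add_assoc] at h
    exact add_left_cancel (add_left_cancel h)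
  have hE : P.θ t = P.θ (polar P.q v (P.mul w u)) := by
    rw [ht, P.polar_sym, polar_comm]
  have h2 : polar P.q (P.mul u v) (P.mul u w)
      = P.q u * P.θ (polar P.q v w) - P.θ t := eq_sub_of_add_eq hkey.symm
  rw [h2, hE, CharTwo.sub_eq_add, add_comm]
end

section
/- Let P = (K, V, q, θ, t ↦ [t], ·) be a polarity algebra with polar form f. Then f(u·v, w·v) = q(v)^θ·f(u, w) for all u, v, w ∈ V. -/
open QuadraticMap

variable {K V : Type*} [Field K] [CharP K 2] [AddCommGroup V] [Module K V]

/-- In a polarity algebra, `f(u·v, w·v) = q(v)^θ f(u, w)`. -/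
theorem polarityAlgebra_polar_mul_right (P : PolarityAlgebra K V) (u v w : V) :
    polar P.q (P.mul u v) (P.mul w v) = P.θ (P.q v) * polar P.q u w := by
  have key : ∀ x a b : V, polar P.q (P.mul a x) b = polar P.q (P.mul b x) a := by
    intro x a b
    have h1 := P.R7 x a b
    have h2 := P.R7 x b a
    rw [add_comm b a] at h2
    have : P.br (polar P.q (P.mul a x) b) = P.br (polar P.q (P.mul b x) a) := by
      have := h1.symm.trans h2
      rw [add_comm (P.mul x a) (P.mul x b)] at this
      exact add_left_cancel this
    exact P.br_inj this
  calc polar P.q (P.mul u v) (P.mul w v)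
      = polar P.q (P.mul (P.mul w v) v) u := key v u (P.mul w v)
    _ = polar P.q (P.θ (P.q v) • w) u := by rw [P.R5]
    _ = P.θ (P.q v) * polar P.q w u := by rw [polar_smul_left, smul_eq_mul]
    _ = P.θ (P.q v) * polar P.q u w := by rw [polar_comm]
end

section
/- Let P = (K, V, q, θ, t ↦ [t], ·) be a polarity algebra. Then (u·v)·(v·u) = q(u·v)·u for all u, v ∈ V. -/
open QuadraticMap

variable {K V : Type*} [Field K] [CharP K 2] [AddCommGroup V] [Module K V]

/-- In a polarity algebra, `(u·v)·(v·u) = q(u·v) • u`. -/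
theorem polarityAlgebra_mul_mul_rev (P : PolarityAlgebra K V) (u v : V) :
    P.mul (P.mul u v) (P.mul v u) = P.q (P.mul u v) • u := by
  have hmul0 : ∀ x : V, P.mul x 0 = 0 := fun x => by
    have := P.R3 0 x 0; simpa using this
  by_cases hv : v = 0
  · subst hv
    rw [hmul0, (P.R1 u).map_zero, hmul0]
    simp
  · have hq : P.q v ≠ 0 := fun h => hv (P.anisotropic v h)
    have hθq : P.θ (P.q v) ≠ 0 := fun h => hq (P.θ.injective (by simpa using h))
    have hvu : P.mul v u = (P.q v)⁻¹ • P.mul v (P.mul u v) := by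
      rw [P.R6, smul_smul, inv_mul_cancel₀ hq, one_smul]
    rw [hvu, P.R3, P.R6 v (P.mul u v), P.R5, map_inv₀, smul_smul, smul_smul]
    congr 1
    field_simp
end

section
/- Let P = (K, V, q, θ, t ↦ [t], ·) be a polarity algebra. Then (u·v)·(v·w) = ((u·(v·w))·v for all u, v, w ∈ V. -/
open QuadraticMap

variable {K V : Type*} [Field K] [CharP K 2] [AddCommGroup V] [Module K V]

/-- In a polarity algebra, `(u·v)·(v·w) = (u·(v·w))·v`. -/
theorem polarityAlgebra_assoc_identity (P : PolarityAlgebra K V) (u v w : V) :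
    P.mul (P.mul u v) (P.mul v w) = P.mul (P.mul u (P.mul v w)) v := by
  have h2K : (2 : K) = 0 := by exact_mod_cast (CharP.cast_eq_zero K 2)
  have addselfK : ∀ a : K, a + a = 0 := fun a => by rw [← two_mul, h2K, zero_mul]
  have addself : ∀ x : V, x + x = 0 := fun x => by
    rw [← two_smul K x, h2K, zero_smul]
  have negself : ∀ x : V, -x = x := fun x => neg_eq_of_add_eq_zero_left (addself x)
  have br0 : P.br 0 = 0 := by
    have h := P.br_add 0 0
    rw [add_zero] at h
    exact (left_eq_add.mp h)
  have mulzero : ∀ x : V, P.mul x 0 = 0 := fun x => by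
    have h := P.R3 0 x 0
    simpa using h
  have fsymm : ∀ a x b : V,
      polar P.q (P.mul a x) b = polar P.q (P.mul b x) a := by
    intro a x b
    have h1 := P.R7 x a b
    have h2 := P.R7 x b a
    rw [add_comm b a] at h2
    have h3 := h1.symm.trans h2
    rw [add_comm (P.mul x b) (P.mul x a)] at h3
    exact P.br_inj (add_left_cancel h3)
  -- f(v·w, v) = 0
  have hWv : polar P.q (P.mul v w) v = 0 := by
    have h := P.R7 w v v
    rw [addself v, mulzero, addself (P.mul w v), zero_add] at h
    exact P.br_inj (by rw [br0]; exact h.symm)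
  have hvW : polar P.q v (P.mul v w) = 0 := by
    rw [polar_comm]; exact hWv
  have hq : P.q (v + P.mul v w) = P.q v + P.q (P.mul v w) := by
    rw [QuadraticMap.map_add (⇑P.q) v (P.mul v w), hvW, add_zero]
  set t := polar P.q (P.mul v u) (P.mul v w) with ht
  set s2 := polar P.q (P.mul v (P.mul u (P.mul v w))) (P.mul v w) with hs2
  -- expand E := (u·(v+W))·(v+W) two ways, W := v·w
  have e1 : P.mul u (v + P.mul v w)
      = P.mul u v + P.mul u (P.mul v w) + P.br t := P.R7 u v (P.mul v w)
  have hadd : ∀ x y : V, P.mul (x + y) (v + P.mul v w)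
      = P.mul x (v + P.mul v w) + P.mul y (v + P.mul v w) :=
    fun x y => (P.R1 _).map_add x y
  have eA : P.mul (P.mul u v) (v + P.mul v w)
      = P.θ (P.q v) • u + P.mul (P.mul u v) (P.mul v w) + P.br (P.q v • t) := by
    rw [P.R7 (P.mul u v) v (P.mul v w), P.R5 u v, P.R6 u v,
      polar_smul_left]
  have eB : P.mul (P.mul u (P.mul v w)) (v + P.mul v w)
      = P.mul (P.mul u (P.mul v w)) v + P.θ (P.q (P.mul v w)) • u + P.br s2 := by
    rw [P.R7 (P.mul u (P.mul v w)) v (P.mul v w), P.R5 u (P.mul v w)]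
  have eC : P.mul (P.br t) (v + P.mul v w)
      = P.br (t * P.q v) + P.br (t * P.q (P.mul v w)) := by
    rw [P.R4, hq, mul_add, P.br_add]
  have Mleft : P.mul (P.mul u (v + P.mul v w)) (v + P.mul v w)
      = P.θ (P.q v) • u + P.θ (P.q (P.mul v w)) • u := by
    rw [P.R5 u (v + P.mul v w), hq, map_add, add_smul]
  have M : P.θ (P.q v) • u + P.mul (P.mul u v) (P.mul v w) + P.br (P.q v • t)
      + (P.mul (P.mul u (P.mul v w)) v + P.θ (P.q (P.mul v w)) • u + P.br s2)
      + (P.br (t * P.q v) + P.br (t * P.q (P.mul v w)))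
      = P.θ (P.q v) • u + P.θ (P.q (P.mul v w)) • u := by
    rw [← eA, ← eB, ← eC, ← hadd, ← hadd, ← e1, Mleft]
  -- the bracket terms cancel
  have c1 : P.br (P.q v • t) + P.br (t * P.q v) = 0 := by
    rw [smul_eq_mul, mul_comm]
    exact addself _
  have c2 : P.br s2 + P.br (t * P.q (P.mul v w)) = 0 := by
    have hs2' : s2 = P.q (P.mul v w) * polar P.q (P.mul (P.mul v w) u) v := by
      rw [hs2, fsymm v (P.mul u (P.mul v w)) (P.mul v w), P.R6 u (P.mul v w),
        polar_smul_left, smul_eq_mul]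
    have ht' : t = polar P.q (P.mul (P.mul v w) u) v := fsymm v u (P.mul v w)
    rw [← P.br_add, hs2', ht', mul_comm (polar P.q (P.mul (P.mul v w) u) v),
      addselfK, br0]
  have M' : P.mul (P.mul u v) (P.mul v w) + P.mul (P.mul u (P.mul v w)) v
      + ((P.θ (P.q v) • u + P.θ (P.q (P.mul v w)) • u)
        + ((P.br (P.q v • t) + P.br (t * P.q v)) + (P.br s2 + P.br (t * P.q (P.mul v w)))))
      = P.θ (P.q v) • u + P.θ (P.q (P.mul v w)) • u :=
    Eq.trans (by abel) M
  rw [c1, c2, add_zero, add_zero] at M'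
  have key : P.mul (P.mul u v) (P.mul v w) + P.mul (P.mul u (P.mul v w)) v = 0 := by
    have h := eq_sub_of_add_eq M'
    simpa using h
  have := eq_neg_of_add_eq_zero_left key
  rw [negself] at this
  exact this
end

section
/- Let P = (K, V, q, θ, t ↦ [t], ·) be a polarity algebra with f = ∂q. Then f(u·v, z·w) + f(u·w, z·v) = f(u,z)·f(v,w)^θ for all u, v, w, z ∈ V. -/
open QuadraticMap

variable {K V : Type*} [Field K] [CharP K 2] [AddCommGroup V] [Module K V]

/-- In a polarity algebra, `f(u·v, z·w) + f(u·w, z·v) = f(u,z) f(v,w)^θ`. -/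
theorem polarityAlgebra_polar_exchange (P : PolarityAlgebra K V) (u v w z : V) :
    polar P.q (P.mul u v) (P.mul z w) + polar P.q (P.mul u w) (P.mul z v)
      = polar P.q u z * P.θ (polar P.q v w) := by

  classical
  -- f(x·a, y) = f(y·a, x)
  have adj : ∀ a x y : V, polar P.q (P.mul x a) y = polar P.q (P.mul y a) x := by
    intro a x y
    have h1 := P.R7 a x y
    have h2 := P.R7 a y x
    rw [add_comm y x] at h2
    have h3 := h1.symm.trans h2
    rw [add_comm (P.mul a y) (P.mul a x)] at h3
    exact P.br_inj (add_left_cancel h3)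
  have key := congrArg (fun x => polar P.q x u) (P.R5 z (v + w))
  beta_reduce at key
  have e0 : P.mul z (v + w)
      = P.mul z v + P.mul z w + P.br (polar P.q (P.mul v z) w) := P.R7 z v w
  have elin : P.mul (P.mul z v + P.mul z w + P.br (polar P.q (P.mul v z) w)) (v + w)
      = P.mul (P.mul z v) (v + w) + P.mul (P.mul z w) (v + w)
        + P.mul (P.br (polar P.q (P.mul v z) w)) (v + w) := by
    rw [(P.R1 (v + w)).map_add, (P.R1 (v + w)).map_add]
  have eA : P.mul (P.mul z v) (v + w)
      = P.θ (P.q v) • z + P.mul (P.mul z v) w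
        + P.br (polar P.q (P.q v • P.mul v z) w) := by
    rw [P.R7 (P.mul z v) v w, P.R5, P.R6]
  have eB : P.mul (P.mul z w) (v + w)
      = P.θ (P.q w) • z + P.mul (P.mul z w) v
        + P.br (polar P.q (P.q w • P.mul w z) v) := by
    rw [add_comm v w, P.R7 (P.mul z w) w v, P.R5, P.R6]
  have eC : P.mul (P.br (polar P.q (P.mul v z) w)) (v + w)
      = P.br (polar P.q (P.mul v z) w * P.q (v + w)) := P.R4 _ _
  rw [e0, elin, eA, eB, eC] at key
  have hq : P.q (v + w) = P.q v + P.q w + polar P.q v w := by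
    simp [QuadraticMap.polar]
  rw [hq] at key
  simp only [polar_add_left, polar_smul_left, P.br_rad, smul_eq_mul, map_add,
    add_zero, zero_add, add_mul, polar_comm P.q z u] at key
  rw [adj v u (P.mul z w), adj w u (P.mul z v)]
  linear_combination key
end
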